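/- For all integers k and r, 5·F(k)·G(k+r) − L(k)·(G(k+r+1) + G(k+r−1)) = (−1)^{k−1}·2·(G(r+1) + G(r−1)). -/

import Mathlib

/-- Two real sequences satisfying the Fibonacci recurrence that agree at 0 and 1
agree everywhere. -/
lemma fib_ext_aux (A B : ℤ → ℝ) (hA : ∀ n : ℤ, A (n + 2) = A (n + 1) + A n)
    (hB : ∀ n : ℤ, B (n + 2) = B (n + 1) + B n) (h0 : A 0 = B 0) (h1 : A 1 = B 1) :
    ∀ n : ℤ, A n = B n := by
  have key : ∀ n : ℤ, A n = B n ∧ A (n + 1) = B (n + 1) := by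
    intro n
    induction n using Int.induction_on with
    | zero => exact ⟨h0, by simpa using h1⟩
    | succ i ih =>
      refine ⟨ih.2, ?_⟩
      have ha := hA i
      have hb := hB i
      rw [show (i : ℤ) + 1 + 1 = i + 2 by ring]
      rw [ha, hb, ih.1, ih.2]
    | pred i ih =>
      have ha := hA (-(i : ℤ) - 1)
      have hb := hB (-(i : ℤ) - 1)
      rw [show -(i : ℤ) - 1 + 2 = -i + 1 by ring, show -(i : ℤ) - 1 + 1 = -i by ring]
        at ha hb
      constructor
      · have := ih.1; have := ih.2; linarith
      · rw [show -(i : ℤ) - 1 + 1 = -i by ring]; exact ih.1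
  exact fun n => (key n).1

/-- a generalization of the fundamental identity of Fibonacci and
Lucas numbers to a gibonacci sequence. -/
theorem statement14 (F L : ℤ → ℤ)
    (hF0 : F 0 = 0) (hF1 : F 1 = 1) (hF : ∀ n : ℤ, F n = F (n - 1) + F (n - 2))
    (hL0 : L 0 = 2) (hL1 : L 1 = 1) (hL : ∀ n : ℤ, L n = L (n - 1) + L (n - 2))
    (G : ℤ → ℝ) (hG : ∀ n : ℤ, G n = G (n - 1) + G (n - 2))
    (k r : ℤ) :
    5 * (F k : ℝ) * G (k + r) - (L k : ℝ) * (G (k + r + 1) + G (k + r - 1)) =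
      (-1 : ℝ) ^ (k - 1) * 2 * (G (r + 1) + G (r - 1)) := by
  have hF2 : ∀ n : ℤ, F (n + 2) = F (n + 1) + F n := fun n => by
    have h := hF (n + 2)
    rw [show n + 2 - 1 = n + 1 by ring, show n + 2 - 2 = n by ring] at h
    exact h
  have hL2 : ∀ n : ℤ, L (n + 2) = L (n + 1) + L n := fun n => by
    have h := hL (n + 2)
    rw [show n + 2 - 1 = n + 1 by ring, show n + 2 - 2 = n by ring] at h
    exact h
  have hG2 : ∀ n : ℤ, G (n + 2) = G (n + 1) + G n := fun n => by
    have h := hG (n + 2)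
    rw [show n + 2 - 1 = n + 1 by ring, show n + 2 - 2 = n by ring] at h
    exact h
  have hFm1 : F (-1) = 1 := by
    have h := hF 1
    rw [show (1 : ℤ) - 1 = 0 by ring, show (1 : ℤ) - 2 = -1 by ring] at h
    omega
  have hF2v : F 2 = 1 := by
    have h := hF2 0
    simp only [zero_add] at h
    omega
  -- L k = F (k+1) + F (k-1)
  have hLF : ∀ n : ℤ, (L n : ℝ) = (F (n + 1) : ℝ) + (F (n - 1) : ℝ) := by
    apply fib_ext_aux
    · intro n
      push_cast [hL2 n]
      ring
    · intro n
      have e1 : F (n + 2 + 1) = F (n + 1 + 1) + F (n + 1) := by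
        have := hF2 (n + 1)
        rw [show n + 1 + 2 = n + 2 + 1 by ring] at this
        exact this
      have e2 : F (n + 2 - 1) = F (n + 1 - 1) + F (n - 1) := by
        have := hF2 (n - 1)
        rw [show n - 1 + 2 = n + 2 - 1 by ring, show n - 1 + 1 = n + 1 - 1 by ring] at this
        exact this
      push_cast [e1, e2]
      ring
    · rw [hL0, show (0 : ℤ) + 1 = 1 by ring, show (0 : ℤ) - 1 = -1 by ring, hF1, hFm1]
      norm_num
    · rw [hL1, show (1 : ℤ) + 1 = 2 by ring, show (1 : ℤ) - 1 = 0 by ring, hF2v, hF0]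
      norm_num
  -- shift lemma: G (r + n) = F n * G (r+1) + F (n-1) * G r
  have shift : ∀ n : ℤ, G (r + n) = (F n : ℝ) * G (r + 1) + (F (n - 1) : ℝ) * G r := by
    apply fib_ext_aux
    · intro n
      have := hG2 (r + n)
      rw [show r + n + 2 = r + (n + 2) by ring, show r + n + 1 = r + (n + 1) by ring] at this
      exact this
    · intro n
      have e1 : F (n + 2) = F (n + 1) + F n := hF2 n
      have e2 : F (n + 2 - 1) = F (n + 1 - 1) + F (n - 1) := by
        have := hF2 (n - 1)
        rw [show n - 1 + 2 = n + 2 - 1 by ring, show n - 1 + 1 = n + 1 - 1 by ring] at this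
        exact this
      push_cast [e1, e2]
      ring
    · rw [show r + 0 = r by ring, hF0, show (0 : ℤ) - 1 = -1 by ring, hFm1]
      norm_num
    · rw [hF1, show (1 : ℤ) - 1 = 0 by ring, hF0]
      norm_num
  -- Cassini-type identity
  have cassini : ∀ n : ℤ,
      (F n : ℝ) ^ 2 - (F n : ℝ) * (F (n - 1) : ℝ) - (F (n - 1) : ℝ) ^ 2
        = (-1 : ℝ) ^ (n - 1) := by
    intro n
    induction n using Int.induction_on with
    | zero =>
      rw [hF0, show (0 : ℤ) - 1 = -1 by ring, hFm1]
      norm_num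
    | succ i ih =>
      have e1 : F ((i : ℤ) + 1) = F i + F (i - 1) := by
        have := hF ((i : ℤ) + 1)
        rw [show (i : ℤ) + 1 - 1 = i by ring, show (i : ℤ) + 1 - 2 = i - 1 by ring] at this
        exact this
      have e2 : ((i : ℤ) + 1) - 1 = i := by ring
      rw [e2]
      have hs : (-1 : ℝ) ^ ((i : ℤ)) = -(-1 : ℝ) ^ ((i : ℤ) - 1) := by
        rw [show (i : ℤ) = (i - 1) + 1 by ring, zpow_add_one₀ (by norm_num : (-1 : ℝ) ≠ 0)]
        ring
      rw [hs, ← ih]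
      push_cast [e1]
      ring
    | pred i ih =>
      have e1 : F (-(i : ℤ)) = F (-(i : ℤ) - 1) + F (-(i : ℤ) - 2) := hF (-(i : ℤ))
      have e2 : (-(i : ℤ) - 1) - 1 = -(i : ℤ) - 2 := by ring
      rw [e2]
      have hs : (-1 : ℝ) ^ (-(i : ℤ) - 2) = -(-1 : ℝ) ^ (-(i : ℤ) - 1) := by
        rw [show -(i : ℤ) - 1 = (-(i : ℤ) - 2) + 1 by ring,
          zpow_add_one₀ (by norm_num : (-1 : ℝ) ≠ 0)]
        ring
      rw [show -(i : ℤ) - 1 = -(i : ℤ) - 1 from rfl] at ih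
      rw [hs]
      have ih' := ih
      rw [show (-(i : ℤ)) - 1 = -(i : ℤ) - 1 from rfl] at ih'
      -- ih' : (F (-i))^2 - F (-i) * F (-i - 1) - (F (-i -1))^2 = (-1)^(-i - 1)
      push_cast [e1] at ih' ⊢
      linear_combination -ih'
  -- rewrite the goal
  have g1 : G (k + r) = (F k : ℝ) * G (r + 1) + (F (k - 1) : ℝ) * G r := by
    rw [show k + r = r + k by ring]; exact shift k
  have g2 : G (k + r + 1) = (F (k + 1) : ℝ) * G (r + 1) + (F k : ℝ) * G r := by
    rw [show k + r + 1 = r + (k + 1) by ring]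
    have := shift (k + 1)
    rw [show k + 1 - 1 = k by ring] at this
    exact this
  have g3 : G (k + r - 1) = (F (k - 1) : ℝ) * G (r + 1) + (F (k - 2) : ℝ) * G r := by
    rw [show k + r - 1 = r + (k - 1) by ring]
    have := shift (k - 1)
    rw [show k - 1 - 1 = k - 2 by ring] at this
    exact this
  have g4 : G (r - 1) = G (r + 1) - G r := by
    have := hG (r + 1)
    rw [show r + 1 - 1 = r by ring, show r + 1 - 2 = r - 1 by ring] at this
    linarith
  have e1 : F (k + 1) = F k + F (k - 1) := by
    have := hF (k + 1)
    rw [show k + 1 - 1 = k by ring, show k + 1 - 2 = k - 1 by ring] at this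
    exact this
  have e2 : F (k - 2) = F k - F (k - 1) := by
    have := hF k
    omega
  rw [g1, g2, g3, g4, hLF k]
  push_cast [e1, e2]
  linear_combination (4 * G (r + 1) - 2 * G r) * cassini k
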